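/- For every Y₀ with 0 < Y₀ < 1/(2e²) there is a constant C = C(Y₀) such that for every m ∈ ℕ and every Y with 0 < Y ≤ Y₀, Σ_{k=0}^{∞} D(k)·Y^k/k! ≤ C · Σ_{k=0}^{∞} (m+1)^k · Y^k/(k!)², where D(k) = Π_{j=1}^{k} (1 + (m+1)/j) (with D(0) = 1). -/

import Mathlib

/-- Key binomial inequality:
`(j+1)·C(k,j+1)² + (k+1)·C(k,j)² ≤ (j+1)·C(k+1,j+1)²`. -/
lemma lemA (k j : ℕ) :
    (j+1) * (Nat.choose k (j+1))^2 + (k+1) * (Nat.choose k j)^2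
      ≤ (j+1) * (Nat.choose (k+1) (j+1))^2 := by
  rcases le_or_gt j k with h | h
  · obtain ⟨d, rfl⟩ := Nat.exists_eq_add_of_le h
    have h1 : Nat.choose (j+d) (j+1) * (j+1) = Nat.choose (j+d) j * d := by
      simpa using Nat.choose_succ_right_eq (j+d) j
    have h2 : Nat.choose (j+d+1) (j+1) = Nat.choose (j+d) j + Nat.choose (j+d) (j+1) :=
      Nat.choose_succ_succ _ _
    set A := Nat.choose (j+d) (j+1)
    set B := Nat.choose (j+d) j
    rw [h2]
    nlinarith [h1, sq_nonneg (A + B), sq_nonneg B, Nat.zero_le (d * B^2)]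
  · have h1 : Nat.choose k (j+1) = 0 := Nat.choose_eq_zero_of_lt (by omega)
    have h2 : Nat.choose k j = 0 := Nat.choose_eq_zero_of_lt h
    simp [h1, h2]

/-- The coefficients `c(k,j) = j!·C(k,j)² = (k!)²/(j!·((k-j)!)²)`. -/
def cc (k j : ℕ) : ℕ := j.factorial * (Nat.choose k j)^2

lemma lemA' (k i : ℕ) :
    cc k (i+1) + (k+1) * cc k i ≤ cc (k+1) (i+1) := by
  have := Nat.mul_le_mul_left i.factorial (lemA k i)
  unfold cc
  rw [Nat.factorial_succ]
  nlinarith [this]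

/-- `∏_{i=1}^k (x+i) ≤ ∑_{j=0}^k c(k,j)·x^{k-j}` for `x ≥ 0`. -/
lemma lemB (x : ℝ) (hx : 0 ≤ x) (k : ℕ) :
    (∏ i ∈ Finset.Icc 1 k, (x + (i : ℝ)))
      ≤ ∑ j ∈ Finset.range (k+1), (cc k j : ℝ) * x^(k-j) := by
  induction k with
  | zero => simp [cc]
  | succ k IH =>
    have hprod : (∏ i ∈ Finset.Icc 1 (k+1), (x + (i : ℝ)))
        = (∏ i ∈ Finset.Icc 1 k, (x + (i : ℝ))) * (x + (k+1 : ℕ)) := by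
      rw [Finset.prod_Icc_succ_top (Nat.one_le_iff_ne_zero.2 (Nat.succ_ne_zero k))]
    rw [hprod]
    have hxk : (0:ℝ) ≤ x + (k+1:ℕ) := by positivity
    have step1 : (∏ i ∈ Finset.Icc 1 k, (x + (i : ℝ))) * (x + (k+1:ℕ))
        ≤ (∑ j ∈ Finset.range (k+1), (cc k j : ℝ) * x^(k-j)) * (x + (k+1:ℕ)) := by
      apply mul_le_mul_of_nonneg_right IH hxk
    refine step1.trans ?_
    -- expand product
    have expand : (∑ j ∈ Finset.range (k+1), (cc k j : ℝ) * x^(k-j)) * (x + (k+1:ℕ))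
        = (∑ j ∈ Finset.range (k+1), (cc k j : ℝ) * x^(k+1-j))
          + ∑ j ∈ Finset.range (k+1), ((k:ℝ)+1) * (cc k j : ℝ) * x^(k-j) := by
      rw [mul_add, Finset.sum_mul, Finset.sum_mul]
      congr 1
      · apply Finset.sum_congr rfl
        intro j hj
        have hjk : j ≤ k := Nat.lt_succ_iff.1 (Finset.mem_range.1 hj)
        rw [mul_assoc, ← pow_succ]
        congr 2
        omega
      · push_cast
        apply Finset.sum_congr rfl
        intro j hj
        ring
    rw [expand]
    -- peel off the `j = 0` terms on both sides
    rw [Finset.sum_range_succ' (fun j => (cc (k+1) j : ℝ) * x^(k+1-j))]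
    rw [Finset.sum_range_succ' (fun j => (cc k j : ℝ) * x^(k+1-j))]
    have h00 : (cc k 0 : ℝ) * x^(k+1-0) = (cc (k+1) 0 : ℝ) * x^(k+1-0) := by
      simp [cc]
    rw [h00]
    -- extend first sum from `range k` to `range (k+1)`: the top term is `0`
    have hext : (∑ i ∈ Finset.range k, (cc k (i+1) : ℝ) * x^(k+1-(i+1)))
        = ∑ i ∈ Finset.range (k+1), (cc k (i+1) : ℝ) * x^(k+1-(i+1)) := by
      rw [Finset.sum_range_succ]
      have : cc k (k+1) = 0 := by simp [cc, Nat.choose_eq_zero_of_lt]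
      simp [this]
    rw [hext, add_right_comm]
    apply add_le_add_left
    rw [← Finset.sum_add_distrib]
    apply Finset.sum_le_sum
    intro i hi
    have hpow : x^(k+1-(i+1)) = x^(k-i) := by congr 1; omega
    rw [hpow]
    rw [← add_mul]
    apply mul_le_mul_of_nonneg_right _ (by positivity)
    exact_mod_cast lemA' k i

/-- `D(k) = ∏_{j=1}^k (1 + (m+1)/j)`, with `D(0) = 1`. -/
noncomputable def Dprod (m k : ℕ) : ℝ :=
  ∏ j ∈ Finset.Icc 1 k, (1 + ((m : ℝ) + 1) / (j : ℝ))

/-- For every `0 < Y₀ < 1/(2e²)` there is `C = C(Y₀)` such that for every `m : ℕ` and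
`0 < Y ≤ Y₀`, `∑_{k≥0} D(k) Y^k / k! ≤ C ∑_{k≥0} (m+1)^k Y^k / (k!)²`. -/
theorem stmt15 (Y₀ : ℝ) (h0 : 0 < Y₀) (h1 : Y₀ < 1 / (2 * Real.exp 2)) :
    ∃ C : ℝ, ∀ m : ℕ, ∀ Y : ℝ, 0 < Y → Y ≤ Y₀ →
      (∑' k : ℕ, Dprod m k * Y ^ k / (Nat.factorial k : ℝ)) ≤
        C * ∑' k : ℕ, ((m : ℝ) + 1) ^ k * Y ^ k / ((Nat.factorial k : ℝ)) ^ 2 := by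
  refine ⟨∑' j : ℕ, Y₀ ^ j / (Nat.factorial j : ℝ), ?_⟩
  intro m Y hY hYY
  set x : ℝ := (m : ℝ) + 1 with hxdef
  have hx0 : (0:ℝ) < x := by positivity
  set f : ℕ → ℝ := fun j => Y ^ j / (Nat.factorial j : ℝ) with hf
  set g : ℕ → ℝ := fun n => x ^ n * Y ^ n / ((Nat.factorial n : ℝ)) ^ 2 with hg
  have hfpos : ∀ j, 0 ≤ f j := fun j => by positivity
  have hgpos : ∀ n, 0 ≤ g n := fun n => by positivity
  have hfs : Summable f := Real.summable_pow_div_factorial Y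
  have hgs : Summable g := by
    apply Summable.of_nonneg_of_le hgpos (fun n => ?_) (Real.summable_pow_div_factorial (x*Y))
    have h2 : (Nat.factorial n : ℝ) ≤ ((Nat.factorial n : ℝ))^2 := by
      have : (1:ℝ) ≤ (Nat.factorial n : ℝ) := by exact_mod_cast n.factorial_pos
      nlinarith
    calc g n ≤ x ^ n * Y ^ n / (Nat.factorial n : ℝ) := by
          apply div_le_div_of_nonneg_left (by positivity) (by positivity) h2
      _ = (x*Y)^n / (Nat.factorial n : ℝ) := by rw [mul_pow]
  have hfn : Summable fun j => ‖f j‖ := by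
    simpa [Real.norm_eq_abs, abs_of_nonneg (hfpos _)] using hfs
  have hgn : Summable fun n => ‖g n‖ := by
    simpa [Real.norm_eq_abs, abs_of_nonneg (hgpos _)] using hgs
  -- key termwise bound: the LHS term is dominated by a Cauchy-product term
  have key : ∀ k : ℕ, Dprod m k * Y ^ k / (Nat.factorial k : ℝ)
      ≤ ∑ j ∈ Finset.range (k+1), f j * g (k - j) := by
    intro k
    have hD : Dprod m k = (∏ i ∈ Finset.Icc 1 k, (x + (i:ℝ))) / (Nat.factorial k : ℝ) := by
      unfold Dprod
      rw [eq_div_iff (by exact_mod_cast k.factorial_pos.ne')]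
      have : (Nat.factorial k : ℝ) = ∏ i ∈ Finset.Icc 1 k, (i : ℝ) := by
        rw [← Finset.Ico_add_one_right_eq_Icc]
        push_cast [← Finset.prod_Ico_id_eq_factorial k]
        rfl
      rw [this, ← Finset.prod_mul_distrib]
      apply Finset.prod_congr rfl
      intro i hi
      have hi1 : 1 ≤ i := (Finset.mem_Icc.1 hi).1
      have hine : (i:ℝ) ≠ 0 := by positivity
      field_simp
      ring
    rw [hD]
    have hb := lemB x hx0.le k
    simp only [cc] at hb
    have hmul : (∏ i ∈ Finset.Icc 1 k, (x + (i:ℝ))) / (Nat.factorial k : ℝ) * Y ^ k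
          / (Nat.factorial k : ℝ)
        = (∏ i ∈ Finset.Icc 1 k, (x + (i:ℝ))) * (Y ^ k / ((Nat.factorial k : ℝ))^2) := by
      field_simp
    rw [hmul]
    have step : (∏ i ∈ Finset.Icc 1 k, (x + (i:ℝ))) * (Y ^ k / ((Nat.factorial k : ℝ))^2)
        ≤ (∑ j ∈ Finset.range (k+1), ((j.factorial * (Nat.choose k j)^2 : ℕ) : ℝ) * x^(k-j))
            * (Y ^ k / ((Nat.factorial k : ℝ))^2) :=
      mul_le_mul_of_nonneg_right hb (by positivity)
    refine step.trans_eq ?_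
    rw [Finset.sum_mul]
    apply Finset.sum_congr rfl
    intro j hj
    have hjk : j ≤ k := Nat.lt_succ_iff.1 (Finset.mem_range.1 hj)
    have hfac : ((Nat.factorial k : ℝ)) =
        (Nat.choose k j : ℝ) * (Nat.factorial j : ℝ) * (Nat.factorial (k-j) : ℝ) := by
      exact_mod_cast (Nat.choose_mul_factorial_mul_factorial hjk).symm
    have hYk : Y ^ k = Y ^ j * Y ^ (k-j) := by
      rw [← pow_add]; congr 1; omega
    have hch : (0:ℝ) < (Nat.choose k j : ℝ) := by
      exact_mod_cast Nat.choose_pos hjk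
    simp only [hf, hg]
    rw [hfac, hYk]
    push_cast
    field_simp
  have hhs : Summable fun k => ∑ j ∈ Finset.range (k+1), f j * g (k - j) :=
    (summable_norm_sum_mul_range_of_summable_norm hfn hgn).of_norm
  have has : Summable fun k => Dprod m k * Y ^ k / (Nat.factorial k : ℝ) := by
    apply Summable.of_nonneg_of_le (fun k => ?_) key hhs
    have : (0:ℝ) ≤ Dprod m k := by
      unfold Dprod
      apply Finset.prod_nonneg
      intro i hi
      positivity
    positivity
  calc (∑' k : ℕ, Dprod m k * Y ^ k / (Nat.factorial k : ℝ))
      ≤ ∑' k : ℕ, ∑ j ∈ Finset.range (k+1), f j * g (k - j) := Summable.tsum_le_tsum key has hhs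
    _ = (∑' j, f j) * ∑' n, g n :=
        (tsum_mul_tsum_eq_tsum_sum_range_of_summable_norm hfn hgn).symm
    _ ≤ (∑' j : ℕ, Y₀ ^ j / (Nat.factorial j : ℝ)) * ∑' n, g n := by
        apply mul_le_mul_of_nonneg_right _ (tsum_nonneg hgpos)
        apply Summable.tsum_le_tsum _ hfs (Real.summable_pow_div_factorial Y₀)
        intro j
        simp only [hf]
        gcongr
    _ = _ := rfl
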